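/- The 7-vertex graph with vertex set {1,2,3,4,5,6,7} and edge set {{1,2},{2,3},{3,4},{4,5},{5,6},{6,1},{1,7},{4,7},{3,5}} (that is, a 6-cycle 1–2–3–4–5–6–1 together with a seventh vertex 7 adjacent to the antipodal vertices 1 and 4, and the chord {3,5}) is minimally unlabellable: it is not labellable, but every proper induced subgraph of it is labellable. -/
import Mathlib


/-- `H` is labellable: for some positive integer `k` the vertices of `H` can be
injectively labelled by `k`-element subsets of `ℕ` so that two distinct vertices
are adjacent if and only if their labels intersect in a set of size `k - 1`. -/
def Labellable {V : Type*} (H : SimpleGraph V) : Prop :=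
  ∃ k : ℕ, 0 < k ∧ ∃ ℓ : V → Finset ℕ, Function.Injective ℓ ∧
    (∀ v, (ℓ v).card = k) ∧
    ∀ u v : V, u ≠ v → (H.Adj u v ↔ (ℓ u ∩ ℓ v).card = k - 1)

/-- The 7-vertex graph with vertex set `{1,…,7}` (vertex `i` is encoded as
`i - 1 : Fin 7`) and edge set
`{{1,2},{2,3},{3,4},{4,5},{5,6},{6,1},{1,7},{4,7},{3,5}}`: a 6-cycle
`1-2-3-4-5-6-1` together with a seventh vertex `7` adjacent to the antipodal
vertices `1` and `4`, and the chord `{3,5}`. -/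
def sevenVertexGraph : SimpleGraph (Fin 7) :=
  SimpleGraph.fromRel (fun a b =>
    (a.val + 1, b.val + 1) ∈
      [(1, 2), (2, 3), (3, 4), (4, 5), (5, 6), (6, 1), (1, 7), (4, 7), (3, 5)])

instance : DecidableRel sevenVertexGraph.Adj := fun a b =>
  decidable_of_iff (a ≠ b ∧ (((a.val + 1, b.val + 1) ∈
      [(1, 2), (2, 3), (3, 4), (4, 5), (5, 6), (6, 1), (1, 7), (4, 7), (3, 5)]) ∨
    ((b.val + 1, a.val + 1) ∈
      [(1, 2), (2, 3), (3, 4), (4, 5), (5, 6), (6, 1), (1, 7), (4, 7), (3, 5)]))) Iff.rfl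

namespace SevenAux

lemma submod (A B C : Finset ℕ) :
    (A ∩ B).card + (B ∩ C).card ≤ B.card + (A ∩ B ∩ C).card := by
  have h1 : (A ∩ B) ∪ (B ∩ C) ⊆ B := by
    intro x hx
    simp only [Finset.mem_union, Finset.mem_inter] at hx
    tauto
  have h2 : (A ∩ B) ∩ (B ∩ C) = A ∩ B ∩ C := by
    ext x
    simp only [Finset.mem_inter]
    tauto
  have h3 := Finset.card_inter_add_card_union (A ∩ B) (B ∩ C)
  have h4 := Finset.card_le_card h1
  rw [h2] at h3
  omega

lemma split (Z S P : Finset ℕ) (h : S ⊆ P) :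
    (Z ∩ P).card = (Z ∩ S).card + (Z ∩ (P \ S)).card := by
  have h1 : (Z ∩ P) ∩ S = Z ∩ S := by
    ext x
    have hx := @h x
    simp only [Finset.mem_inter]
    tauto
  have h2 : (Z ∩ P) \ S = Z ∩ (P \ S) := by
    ext x
    simp only [Finset.mem_inter, Finset.mem_sdiff]
    tauto
  have h3 := Finset.card_inter_add_card_sdiff (Z ∩ P) S
  rw [h1, h2] at h3
  omega

lemma subset_of_card_inter (X Y : Finset ℕ) (h : Y.card ≤ (X ∩ Y).card) : Y ⊆ X := by
  have h1 : X ∩ Y = Y := Finset.eq_of_subset_of_card_le Finset.inter_subset_right h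
  intro x hx
  rw [← h1] at hx
  exact (Finset.mem_inter.mp hx).1

lemma three_sets (U1 U2 U3 : Finset ℕ) (h1 : U1.card = 1) (h2 : U2.card = 1) (h3 : U3.card = 1)
    (h : (U1 ∪ U2 ∪ U3).card ≤ 2) : U1 = U2 ∨ U1 = U3 ∨ U2 = U3 := by
  obtain ⟨a, rfl⟩ := Finset.card_eq_one.mp h1
  obtain ⟨b, rfl⟩ := Finset.card_eq_one.mp h2
  obtain ⟨c, rfl⟩ := Finset.card_eq_one.mp h3
  by_contra hc
  push_neg at hc
  obtain ⟨hab, hac, hbc⟩ := hc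
  have hab' : a ≠ b := fun e => hab (by rw [e])
  have hac' : a ≠ c := fun e => hac (by rw [e])
  have hbc' : b ≠ c := fun e => hbc (by rw [e])
  have he : ({a} ∪ {b} ∪ {c} : Finset ℕ) = insert a (insert b {c}) := by
    ext x
    simp only [Finset.mem_union, Finset.mem_insert, Finset.mem_singleton]
    tauto
  rw [he, Finset.card_insert_of_notMem (by simp [hab', hac']),
    Finset.card_insert_of_notMem (by simp [hbc'])] at h
  simp at h

lemma three_distinct (U1 U2 U3 : Finset ℕ) (h1 : U1.card = 1) (h2 : U2.card = 1) (h3 : U3.card = 1)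
    (h12 : U1 ≠ U2) (h13 : U1 ≠ U3) (h23 : U2 ≠ U3) : (U1 ∪ U2 ∪ U3).card = 3 := by
  obtain ⟨a, rfl⟩ := Finset.card_eq_one.mp h1
  obtain ⟨b, rfl⟩ := Finset.card_eq_one.mp h2
  obtain ⟨c, rfl⟩ := Finset.card_eq_one.mp h3
  have hab' : a ≠ b := fun e => h12 (by rw [e])
  have hac' : a ≠ c := fun e => h13 (by rw [e])
  have hbc' : b ≠ c := fun e => h23 (by rw [e])
  have he : ({a} ∪ {b} ∪ {c} : Finset ℕ) = insert a (insert b {c}) := by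
    ext x
    simp only [Finset.mem_union, Finset.mem_insert, Finset.mem_singleton]
    tauto
  rw [he, Finset.card_insert_of_notMem (by simp [hab', hac']),
    Finset.card_insert_of_notMem (by simp [hbc']), Finset.card_singleton]

lemma pairC (k : ℕ) (X U W W' : Finset ℕ) (hXW : X ⊆ W) (hXW' : X ⊆ W')
    (hUW : U ⊆ W) (hUW' : U ⊆ W') (hd : Disjoint X U)
    (hXc : X.card + 2 = k) (hU : U.card = 1) (hWW' : (W ∩ W').card + 2 ≤ k) : False := by
  have hsub : X ∪ U ⊆ W ∩ W' := by
    intro x hx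
    rcases Finset.mem_union.mp hx with hx | hx
    · exact Finset.mem_inter.mpr ⟨hXW hx, hXW' hx⟩
    · exact Finset.mem_inter.mpr ⟨hUW hx, hUW' hx⟩
  have h1 := Finset.card_le_card hsub
  rw [Finset.card_union_of_disjoint hd] at h1
  omega

lemma ending (k : ℕ) (X U1 U2 U3 W1 W2 W3 : Finset ℕ)
    (hX1 : X ⊆ W1) (hX2 : X ⊆ W2) (hX3 : X ⊆ W3) (hXc : X.card + 2 = k)
    (hU1c : U1.card = 1) (hU2c : U2.card = 1) (hU3c : U3.card = 1)
    (hU1W : U1 ⊆ W1) (hU2W : U2 ⊆ W2) (hU3W : U3 ⊆ W3)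
    (hd1 : Disjoint X U1) (hd2 : Disjoint X U2) (hd3 : Disjoint X U3)
    (hE : (U1 ∪ U2 ∪ U3).card ≤ 2)
    (hW12 : (W1 ∩ W2).card + 2 ≤ k) (hW13 : (W1 ∩ W3).card + 2 ≤ k)
    (hW23 : (W2 ∩ W3).card + 2 ≤ k) : False := by
  rcases three_sets U1 U2 U3 hU1c hU2c hU3c hE with h | h | h
  · exact pairC k X U1 W1 W2 hX1 hX2 hU1W (by rw [h]; exact hU2W) hd1 hXc hU1c hW12
  · exact pairC k X U1 W1 W3 hX1 hX3 hU1W (by rw [h]; exact hU3W) hd1 hXc hU1c hW13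
  · exact pairC k X U2 W2 W3 hX2 hX3 hU2W (by rw [h]; exact hU3W) hd2 hXc hU2c hW23

lemma typeIW (k : ℕ) (S P Q R W : Finset ℕ)
    (hPQ : P ∩ Q = S) (hPR : P ∩ R = S)
    (hPc : P.card = k) (hSc : S.card + 1 = k)
    (hWP : (W ∩ P).card + 1 = k) (hWQ : (W ∩ Q).card + 2 ≤ k) (hWR : (W ∩ R).card + 2 ≤ k) :
    (W ∩ S).card + 2 = k ∧ W ∩ Q = W ∩ S ∧ W ∩ R = W ∩ S ∧
    (W \ (P ∪ Q ∪ R)).card + k = W.card + 1 ∧ W ⊆ (W ∩ P) ∪ (W \ (P ∪ Q ∪ R)) := by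
  have hSQ : S ⊆ Q := hPQ ▸ Finset.inter_subset_right
  have hSR : S ⊆ R := hPR ▸ Finset.inter_subset_right
  have hSP : S ⊆ P := hPQ ▸ Finset.inter_subset_left
  have h1 : (W ∩ P).card + (P ∩ Q).card ≤ P.card + (W ∩ P ∩ Q).card := submod W P Q
  have hWS : W ∩ P ∩ Q = W ∩ S := by rw [Finset.inter_assoc, hPQ]
  rw [hWS, hPQ] at h1
  have h2 : W ∩ S ⊆ W ∩ Q := Finset.inter_subset_inter Finset.Subset.rfl hSQ
  have h2c := Finset.card_le_card h2
  have h2R : W ∩ S ⊆ W ∩ R := Finset.inter_subset_inter Finset.Subset.rfl hSR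
  have h2Rc := Finset.card_le_card h2R
  have hWSc : (W ∩ S).card + 2 = k := by omega
  have hQeq : W ∩ Q = W ∩ S := (Finset.eq_of_subset_of_card_le h2 (by omega)).symm
  have hReq : W ∩ R = W ∩ S := (Finset.eq_of_subset_of_card_le h2R (by omega)).symm
  have hcover : W ∩ (P ∪ Q ∪ R) = W ∩ P := by
    ext x
    simp only [Finset.mem_inter, Finset.mem_union]
    constructor
    · rintro ⟨hw, hx⟩
      refine ⟨hw, ?_⟩
      rcases hx with (hp | hq) | hr
      · exact hp
      · have hx2 : x ∈ W ∩ Q := Finset.mem_inter.mpr ⟨hw, hq⟩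
        rw [hQeq] at hx2
        exact hSP (Finset.mem_inter.mp hx2).2
      · have hx2 : x ∈ W ∩ R := Finset.mem_inter.mpr ⟨hw, hr⟩
        rw [hReq] at hx2
        exact hSP (Finset.mem_inter.mp hx2).2
    · rintro ⟨hw, hp⟩
      exact ⟨hw, Or.inl (Or.inl hp)⟩
  have hsd := Finset.card_inter_add_card_sdiff W (P ∪ Q ∪ R)
  rw [hcover] at hsd
  refine ⟨hWSc, hQeq, hReq, by omega, ?_⟩
  intro x hx
  simp only [Finset.mem_union, Finset.mem_inter, Finset.mem_sdiff]
  by_cases hxin : x ∈ P ∪ Q ∪ R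
  · left
    have hx2 : x ∈ W ∩ P := hcover ▸ Finset.mem_inter.mpr ⟨hx, hxin⟩
    exact Finset.mem_inter.mp hx2
  · right
    refine ⟨hx, ?_⟩
    simp only [Finset.mem_union] at hxin
    tauto

lemma Zedge (k : ℕ) (P X W Z : Finset ℕ)
    (hUc : (W \ X).card = 1) (hWsub : W ⊆ (W ∩ P) ∪ (W \ X))
    (hZP : (Z ∩ P).card + 2 ≤ k) (hZW : (Z ∩ W).card + 1 = k) :
    (W \ X) ⊆ Z ∧ Z ∩ P ⊆ W ∧ (Z ∩ P).card + 2 = k := by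
  have hsub : Z ∩ W ⊆ (Z ∩ (W ∩ P)) ∪ (Z ∩ (W \ X)) := by
    intro x hx
    have hx' := Finset.mem_inter.mp hx
    have hx2 := hWsub hx'.2
    simp only [Finset.mem_union, Finset.mem_inter] at hx2 ⊢
    tauto
  have hc1 := Finset.card_le_card hsub
  have hc2 := Finset.card_union_le (Z ∩ (W ∩ P)) (Z ∩ (W \ X))
  have hc3 : Z ∩ (W ∩ P) ⊆ Z ∩ P :=
    Finset.inter_subset_inter Finset.Subset.rfl Finset.inter_subset_right
  have hc3c := Finset.card_le_card hc3
  have hc4 : (Z ∩ (W \ X)).card ≤ (W \ X).card := Finset.card_le_card Finset.inter_subset_right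
  have hUZ : (W \ X) ⊆ Z := subset_of_card_inter Z (W \ X) (by omega)
  have heq : Z ∩ (W ∩ P) = Z ∩ P := Finset.eq_of_subset_of_card_le hc3 (by omega)
  refine ⟨hUZ, ?_, by omega⟩
  intro x hx
  rw [← heq] at hx
  exact (Finset.mem_inter.mp (Finset.mem_inter.mp hx).2).1

lemma typeIIW (k : ℕ) (T P Q R W : Finset ℕ)
    (hPT : P ⊆ T) (hQT : Q ⊆ T) (hRT : R ⊆ T)
    (hTc : T.card = k + 1) (hQc : Q.card = k) (hRc : R.card = k) (hWc : W.card = k)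
    (hWP : (W ∩ P).card + 1 = k) (hWQ : (W ∩ Q).card + 2 ≤ k) (hWR : (W ∩ R).card + 2 ≤ k) :
    (W ∩ T).card + 2 = k + 1 ∧ W ∩ T = W ∩ P ∧ (T \ Q) ⊆ W ∧ (T \ R) ⊆ W ∧
    (W \ T).card = 1 ∧ W ⊆ (W ∩ P) ∪ (W \ T) := by
  have h1 : (W ∩ T).card = (W ∩ Q).card + (W ∩ (T \ Q)).card := split W Q T hQT
  have h1R : (W ∩ T).card = (W ∩ R).card + (W ∩ (T \ R)).card := split W R T hRT
  have hTQ : (T \ Q).card = 1 := by rw [Finset.card_sdiff_of_subset hQT]; omega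
  have hTR : (T \ R).card = 1 := by rw [Finset.card_sdiff_of_subset hRT]; omega
  have h2 : (W ∩ (T \ Q)).card ≤ 1 := by
    have := Finset.card_le_card (Finset.inter_subset_right : W ∩ (T \ Q) ⊆ T \ Q)
    omega
  have h3 : W ∩ P ⊆ W ∩ T := Finset.inter_subset_inter Finset.Subset.rfl hPT
  have h3c := Finset.card_le_card h3
  have hWT : (W ∩ T).card + 2 = k + 1 := by omega
  have hPeq : W ∩ T = W ∩ P := (Finset.eq_of_subset_of_card_le h3 (by omega)).symm
  have hQW : T \ Q ⊆ W := subset_of_card_inter W (T \ Q) (by omega)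
  have hRW : T \ R ⊆ W := subset_of_card_inter W (T \ R) (by omega)
  have h4 := Finset.card_inter_add_card_sdiff W T
  refine ⟨hWT, hPeq, hQW, hRW, by omega, ?_⟩
  intro x hx
  simp only [Finset.mem_union, Finset.mem_inter, Finset.mem_sdiff]
  by_cases hxT : x ∈ T
  · left
    have hx2 : x ∈ W ∩ P := hPeq ▸ Finset.mem_inter.mpr ⟨hx, hxT⟩
    exact Finset.mem_inter.mp hx2
  · right
    exact ⟨hx, hxT⟩

lemma A1 {a b k : ℕ} (h1 : a + 1 = k) (h2 : b + 1 = k) : a ≤ b := by omega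

lemma A2 {u w k : ℕ} (h1 : u + k = w + 1) (h2 : w = k) : u = 1 := by omega

lemma A3 {k s0 p q r zP zQ zR E zc : ℕ} (h1 : zP = s0 + p) (h2 : zQ = s0 + q)
    (h3 : zR = s0 + r) (h4 : zP + 2 = k) (h5 : zQ + 2 = k) (h6 : zR + 2 = k)
    (h7 : zP + q + r + E ≤ zc) (h8 : zc = k) (h9 : 1 ≤ E) : s0 + 2 = k ∧ E ≤ 2 := by
  omega

lemma caseI (k : ℕ) (P Q R W1 W2 W3 Z : Finset ℕ)
    (hPc : P.card = k) (hQc : Q.card = k) (hRc : R.card = k)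
    (hW1c : W1.card = k) (hW2c : W2.card = k) (hW3c : W3.card = k) (hZc : Z.card = k)
    (hPQ : (P ∩ Q).card + 1 = k) (hPR : (P ∩ R).card + 1 = k) (hQR : (Q ∩ R).card + 1 = k)
    (hW1P : (W1 ∩ P).card + 1 = k) (hW1Q : (W1 ∩ Q).card + 2 ≤ k) (hW1R : (W1 ∩ R).card + 2 ≤ k)
    (hW2Q : (W2 ∩ Q).card + 1 = k) (hW2P : (W2 ∩ P).card + 2 ≤ k) (hW2R : (W2 ∩ R).card + 2 ≤ k)
    (hW3R : (W3 ∩ R).card + 1 = k) (hW3P : (W3 ∩ P).card + 2 ≤ k) (hW3Q : (W3 ∩ Q).card + 2 ≤ k)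
    (hZW1 : (Z ∩ W1).card + 1 = k) (hZW2 : (Z ∩ W2).card + 1 = k) (hZW3 : (Z ∩ W3).card + 1 = k)
    (hZP : (Z ∩ P).card + 2 ≤ k) (hZQ : (Z ∩ Q).card + 2 ≤ k) (hZR : (Z ∩ R).card + 2 ≤ k)
    (hW12 : (W1 ∩ W2).card + 2 ≤ k) (hW13 : (W1 ∩ W3).card + 2 ≤ k)
    (hW23 : (W2 ∩ W3).card + 2 ≤ k)
    (hm : (P ∩ Q ∩ R).card + 1 = k) : False := by
  obtain ⟨S, hSdef⟩ : ∃ S, P ∩ Q ∩ R = S := ⟨_, rfl⟩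
  rw [hSdef] at hm
  have hSsubPQ : S ⊆ P ∩ Q := hSdef ▸ Finset.inter_subset_left
  have hSsubPR : S ⊆ P ∩ R := by
    intro x hx
    rw [← hSdef] at hx
    simp only [Finset.mem_inter] at hx ⊢
    tauto
  have hSsubQR : S ⊆ Q ∩ R := by
    intro x hx
    rw [← hSdef] at hx
    simp only [Finset.mem_inter] at hx ⊢
    tauto
  have hSPQ : P ∩ Q = S := (Finset.eq_of_subset_of_card_le hSsubPQ (A1 hPQ hm)).symm
  have hSPR : P ∩ R = S := (Finset.eq_of_subset_of_card_le hSsubPR (A1 hPR hm)).symm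
  have hSQR : Q ∩ R = S := (Finset.eq_of_subset_of_card_le hSsubQR (A1 hQR hm)).symm
  have hSsubP : S ⊆ P := fun x hx => (Finset.mem_inter.mp (hSsubPQ hx)).1
  have hSsubQ : S ⊆ Q := fun x hx => (Finset.mem_inter.mp (hSsubPQ hx)).2
  have hSsubR : S ⊆ R := fun x hx => (Finset.mem_inter.mp (hSsubPR hx)).2
  -- the three W analyses
  obtain ⟨hW1S, hW1Qe, hW1Re, hU1k, hW1sub⟩ :=
    typeIW k S P Q R W1 hSPQ hSPR hPc hm hW1P hW1Q hW1R
  obtain ⟨hW2S, hW2Pe, hW2Re, hU2k, hW2sub⟩ :=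
    typeIW k S Q P R W2 (by rw [Finset.inter_comm]; exact hSPQ) hSQR hQc hm hW2Q hW2P hW2R
  obtain ⟨hW3S, hW3Pe, hW3Qe, hU3k, hW3sub⟩ :=
    typeIW k S R P Q W3 (by rw [Finset.inter_comm]; exact hSPR)
      (by rw [Finset.inter_comm]; exact hSQR) hRc hm hW3R hW3P hW3Q
  have hu2 : Q ∪ P ∪ R = P ∪ Q ∪ R := by
    ext x; simp only [Finset.mem_union]; tauto
  have hu3 : R ∪ P ∪ Q = P ∪ Q ∪ R := by
    ext x; simp only [Finset.mem_union]; tauto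
  rw [hu2] at hU2k hW2sub
  rw [hu3] at hU3k hW3sub
  have hU1c : (W1 \ (P ∪ Q ∪ R)).card = 1 := A2 hU1k hW1c
  have hU2c : (W2 \ (P ∪ Q ∪ R)).card = 1 := A2 hU2k hW2c
  have hU3c : (W3 \ (P ∪ Q ∪ R)).card = 1 := A2 hU3k hW3c
  -- the Z analyses
  obtain ⟨hU1Z, hZPW1, hZPc⟩ := Zedge k P (P ∪ Q ∪ R) W1 Z hU1c hW1sub hZP hZW1
  obtain ⟨hU2Z, hZQW2, hZQc⟩ := Zedge k Q (P ∪ Q ∪ R) W2 Z hU2c hW2sub hZQ hZW2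
  obtain ⟨hU3Z, hZRW3, hZRc⟩ := Zedge k R (P ∪ Q ∪ R) W3 Z hU3c hW3sub hZR hZW3
  have hsP := split Z S P hSsubP
  have hsQ := split Z S Q hSsubQ
  have hsR := split Z S R hSsubR
  -- counting inside Z
  have hd1 : Disjoint (Z ∩ P) (Z ∩ (Q \ S)) := by
    rw [Finset.disjoint_left]
    intro x hx hy
    simp only [Finset.mem_inter, Finset.mem_sdiff] at hx hy
    exact hy.2.2 (by rw [← hSPQ]; exact Finset.mem_inter.mpr ⟨hx.2, hy.2.1⟩)
  have hd2 : Disjoint ((Z ∩ P) ∪ (Z ∩ (Q \ S))) (Z ∩ (R \ S)) := by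
    rw [Finset.disjoint_union_left]
    constructor
    · rw [Finset.disjoint_left]
      intro x hx hy
      simp only [Finset.mem_inter, Finset.mem_sdiff] at hx hy
      exact hy.2.2 (by rw [← hSPR]; exact Finset.mem_inter.mpr ⟨hx.2, hy.2.1⟩)
    · rw [Finset.disjoint_left]
      intro x hx hy
      simp only [Finset.mem_inter, Finset.mem_sdiff] at hx hy
      exact hy.2.2 (by rw [← hSQR]; exact Finset.mem_inter.mpr ⟨hx.2.1, hy.2.1⟩)
  have hd3 : Disjoint ((Z ∩ P) ∪ (Z ∩ (Q \ S)) ∪ (Z ∩ (R \ S)))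
      ((W1 \ (P ∪ Q ∪ R)) ∪ (W2 \ (P ∪ Q ∪ R)) ∪ (W3 \ (P ∪ Q ∪ R))) := by
    rw [Finset.disjoint_left]
    intro x hx hy
    simp only [Finset.mem_union, Finset.mem_inter, Finset.mem_sdiff] at hx hy
    have hxin : (x ∈ P ∨ x ∈ Q) ∨ x ∈ R := by
      rcases hx with (h | h) | h
      · exact Or.inl (Or.inl h.2)
      · exact Or.inl (Or.inr h.2.1)
      · exact Or.inr h.2.1
    rcases hy with (h' | h') | h' <;> exact h'.2 hxin
  have hsubZ : ((Z ∩ P) ∪ (Z ∩ (Q \ S)) ∪ (Z ∩ (R \ S))) ∪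
      ((W1 \ (P ∪ Q ∪ R)) ∪ (W2 \ (P ∪ Q ∪ R)) ∪ (W3 \ (P ∪ Q ∪ R))) ⊆ Z := by
    intro x hx
    simp only [Finset.mem_union, Finset.mem_inter, Finset.mem_sdiff] at hx
    rcases hx with ((h | h) | h) | ((h | h) | h)
    · exact h.1
    · exact h.1
    · exact h.1
    · exact hU1Z (Finset.mem_sdiff.mpr ⟨h.1, by simp only [Finset.mem_union]; exact h.2⟩)
    · exact hU2Z (Finset.mem_sdiff.mpr ⟨h.1, by simp only [Finset.mem_union]; exact h.2⟩)
    · exact hU3Z (Finset.mem_sdiff.mpr ⟨h.1, by simp only [Finset.mem_union]; exact h.2⟩)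
  have hcount := Finset.card_le_card hsubZ
  rw [Finset.card_union_of_disjoint hd3, Finset.card_union_of_disjoint hd2,
    Finset.card_union_of_disjoint hd1] at hcount
  have hEge : 1 ≤ ((W1 \ (P ∪ Q ∪ R)) ∪ (W2 \ (P ∪ Q ∪ R)) ∪ (W3 \ (P ∪ Q ∪ R))).card := by
    have hsub : W1 \ (P ∪ Q ∪ R) ⊆
        (W1 \ (P ∪ Q ∪ R)) ∪ (W2 \ (P ∪ Q ∪ R)) ∪ (W3 \ (P ∪ Q ∪ R)) := by
      intro x hx
      simp only [Finset.mem_union]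
      tauto
    have := Finset.card_le_card hsub
    omega
  -- apply ending with X = Z ∩ S
  obtain ⟨hXc, hEle⟩ := A3 hsP hsQ hsR hZPc hZQc hZRc hcount hZc hEge
  refine ending k (Z ∩ S) (W1 \ (P ∪ Q ∪ R)) (W2 \ (P ∪ Q ∪ R)) (W3 \ (P ∪ Q ∪ R)) W1 W2 W3
    ?_ ?_ ?_ hXc hU1c hU2c hU3c Finset.sdiff_subset Finset.sdiff_subset
    Finset.sdiff_subset ?_ ?_ ?_ hEle hW12 hW13 hW23
  · exact fun x hx => hZPW1 (Finset.mem_inter.mpr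
      ⟨(Finset.mem_inter.mp hx).1, hSsubP (Finset.mem_inter.mp hx).2⟩)
  · exact fun x hx => hZQW2 (Finset.mem_inter.mpr
      ⟨(Finset.mem_inter.mp hx).1, hSsubQ (Finset.mem_inter.mp hx).2⟩)
  · exact fun x hx => hZRW3 (Finset.mem_inter.mpr
      ⟨(Finset.mem_inter.mp hx).1, hSsubR (Finset.mem_inter.mp hx).2⟩)
  · rw [Finset.disjoint_left]
    intro x hx hy
    simp only [Finset.mem_inter, Finset.mem_sdiff, Finset.mem_union] at hx hy
    exact hy.2 (Or.inl (Or.inl (hSsubP hx.2)))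
  · rw [Finset.disjoint_left]
    intro x hx hy
    simp only [Finset.mem_inter, Finset.mem_sdiff, Finset.mem_union] at hx hy
    exact hy.2 (Or.inl (Or.inl (hSsubP hx.2)))
  · rw [Finset.disjoint_left]
    intro x hx hy
    simp only [Finset.mem_inter, Finset.mem_sdiff, Finset.mem_union] at hx hy
    exact hy.2 (Or.inl (Or.inl (hSsubP hx.2)))

lemma unionCard (k : ℕ) (P Q R : Finset ℕ) (hPc : P.card = k) (hQc : Q.card = k)
    (hRc : R.card = k) (hPQ : (P ∩ Q).card + 1 = k) (hPR : (P ∩ R).card + 1 = k)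
    (hQR : (Q ∩ R).card + 1 = k) (hm : (P ∩ Q ∩ R).card + 2 = k) :
    (P ∪ Q ∪ R).card = k + 1 := by
  have i1 := Finset.card_inter_add_card_union P Q
  have i2 := Finset.card_inter_add_card_union (R ∩ P) (R ∩ Q)
  have e1 : (R ∩ P) ∩ (R ∩ Q) = P ∩ Q ∩ R := by
    ext x; simp only [Finset.mem_inter]; tauto
  have e2 : (R ∩ P) ∪ (R ∩ Q) = R ∩ (P ∪ Q) := by
    ext x; simp only [Finset.mem_inter, Finset.mem_union]; tauto
  have i3 := Finset.card_inter_add_card_union (P ∪ Q) R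
  have e3 : (P ∪ Q) ∩ R = R ∩ (P ∪ Q) := Finset.inter_comm _ _
  rw [e1, e2] at i2
  rw [e3] at i3
  have eRP : (R ∩ P).card = (P ∩ R).card := by rw [Finset.inter_comm]
  have eRQ : (R ∩ Q).card = (Q ∩ R).card := by rw [Finset.inter_comm]
  omega

lemma A4 {k zT zP zQ zR dP dQ dR zS zc : ℕ}
    (hsP : zT = zP + dP) (hsQ : zT = zQ + dQ) (hsR : zT = zR + dR)
    (hZPc : zP + 2 = k) (hZQc : zQ + 2 = k) (hZRc : zR + 2 = k)
    (hdP : dP ≤ 1) (hdQ : dQ ≤ 1) (hdR : dR ≤ 1)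
    (hzsd : zT + zS = zc) (hzc : zc = k) :
    (zT + 2 = k ∧ zS = 2) ∨ (zT + 1 = k ∧ dP = 1 ∧ dQ = 1 ∧ dR = 1 ∧ zS = 1) := by
  omega

lemma A5 {a k t : ℕ} (h1 : a + 3 ≤ t) (h2 : t = k + 1) (h3 : a + 1 = k) : False := by omega

lemma A6 {a b k : ℕ} (h1 : a + 2 = k) (h2 : b + 2 = k) : a ≤ b := by omega

lemma subaux (k : ℕ) (T P W Z : Finset ℕ) (hTc : T.card = k + 1) (hPc : P.card = k)
    (hPT : P ⊆ T) (hWT : (W ∩ T).card + 2 = k + 1) (hPeq : W ∩ T = W ∩ P)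
    (hZT : (Z ∩ T).card + 1 = k) (hZPc : (Z ∩ P).card + 2 = k)
    (hZPW : Z ∩ P ⊆ W) (hDPZ : T \ P ⊆ Z) :
    ((T \ W) \ (T \ P)).card = 1 ∧ T \ W = (T \ P) ∪ ((T \ W) \ (T \ P)) ∧
    Disjoint ((T \ W) \ (T \ P)) Z := by
  have hTWc : (T ∩ W).card + (T \ W).card = T.card := Finset.card_inter_add_card_sdiff T W
  have hic : T ∩ W = W ∩ T := Finset.inter_comm T W
  rw [hic] at hTWc
  have hTW2 : (T \ W).card = 2 := by omega
  have hDPW : T \ P ⊆ T \ W := by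
    intro x hx
    rw [Finset.mem_sdiff] at hx ⊢
    refine ⟨hx.1, fun hw => hx.2 ?_⟩
    have hx2 : x ∈ W ∩ P := hPeq ▸ Finset.mem_inter.mpr ⟨hw, hx.1⟩
    exact (Finset.mem_inter.mp hx2).2
  have hDPc : (T \ P).card = 1 := by rw [Finset.card_sdiff_of_subset hPT]; omega
  have hE1c : ((T \ W) \ (T \ P)).card = 1 := by rw [Finset.card_sdiff_of_subset hDPW]; omega
  have hTWeq : T \ W = (T \ P) ∪ ((T \ W) \ (T \ P)) := by
    ext x
    have hd := @hDPW x
    simp only [Finset.mem_sdiff, Finset.mem_union] at hd ⊢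
    tauto
  have hsub1 : T \ P ⊆ Z ∩ (T \ W) := fun x hx => Finset.mem_inter.mpr ⟨hDPZ hx, hDPW hx⟩
  have hsplit : (Z ∩ T).card = (Z ∩ (T ∩ W)).card + (Z ∩ (T \ (T ∩ W))).card :=
    split Z (T ∩ W) T Finset.inter_subset_left
  have he : T \ (T ∩ W) = T \ W := by
    ext x; simp only [Finset.mem_sdiff, Finset.mem_inter]; tauto
  rw [he] at hsplit
  have hsub2 : Z ∩ P ⊆ Z ∩ (T ∩ W) := by
    intro x hx
    have hx' := Finset.mem_inter.mp hx
    exact Finset.mem_inter.mpr ⟨hx'.1, Finset.mem_inter.mpr ⟨hPT hx'.2, hZPW hx⟩⟩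
  have hc2 := Finset.card_le_card hsub2
  have hle : (Z ∩ (T \ W)).card ≤ (T \ P).card := by omega
  have heq : T \ P = Z ∩ (T \ W) := Finset.eq_of_subset_of_card_le hsub1 hle
  refine ⟨hE1c, hTWeq, ?_⟩
  rw [Finset.disjoint_left]
  intro x hx hz
  rw [Finset.mem_sdiff] at hx
  have hx2 : x ∈ Z ∩ (T \ W) := Finset.mem_inter.mpr ⟨hz, hx.1⟩
  rw [← heq] at hx2
  exact hx.2 hx2

lemma EiEj (k : ℕ) (T P Q E U W W' : Finset ℕ)
    (h1 : T \ W = (T \ P) ∪ E) (h2 : T \ W' = (T \ Q) ∪ E)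
    (hTc : T.card = k + 1) (hUc : U.card = 1) (hUW : U ⊆ W) (hUW' : U ⊆ W')
    (hUT : Disjoint U T) (hWW' : (W ∩ W').card + 2 ≤ k)
    (hDPc : (T \ P).card = 1) (hDQc : (T \ Q).card = 1) (hEc : E.card = 1) : False := by
  have hkey : T \ ((T \ P) ∪ (T \ Q) ∪ E) ⊆ W ∩ W' := by
    intro x hx
    rw [Finset.mem_sdiff] at hx
    obtain ⟨hxT, hxn⟩ := hx
    simp only [Finset.mem_union, not_or] at hxn
    obtain ⟨⟨hnP, hnQ⟩, hnE⟩ := hxn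
    have hxW : x ∈ W := by
      by_contra hw
      have hx2 : x ∈ T \ W := Finset.mem_sdiff.mpr ⟨hxT, hw⟩
      rw [h1] at hx2
      rcases Finset.mem_union.mp hx2 with h | h
      · exact hnP h
      · exact hnE h
    have hxW' : x ∈ W' := by
      by_contra hw
      have hx2 : x ∈ T \ W' := Finset.mem_sdiff.mpr ⟨hxT, hw⟩
      rw [h2] at hx2
      rcases Finset.mem_union.mp hx2 with h | h
      · exact hnQ h
      · exact hnE h
    exact Finset.mem_inter.mpr ⟨hxW, hxW'⟩
  have hA := Finset.card_inter_add_card_sdiff T ((T \ P) ∪ (T \ Q) ∪ E)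
  have hA2 : (T ∩ ((T \ P) ∪ (T \ Q) ∪ E)).card ≤ 3 := by
    have h3 := Finset.card_union_le ((T \ P) ∪ (T \ Q)) E
    have h4 := Finset.card_union_le (T \ P) (T \ Q)
    have h5 := Finset.card_le_card
      (Finset.inter_subset_right : T ∩ ((T \ P) ∪ (T \ Q) ∪ E) ⊆ (T \ P) ∪ (T \ Q) ∪ E)
    omega
  have hdisj : Disjoint (T \ ((T \ P) ∪ (T \ Q) ∪ E)) U :=
    Finset.disjoint_left.mpr fun {x} hx hxU =>
      (Finset.disjoint_left.mp hUT) hxU (Finset.mem_sdiff.mp hx).1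
  have hsub2 : (T \ ((T \ P) ∪ (T \ Q) ∪ E)) ∪ U ⊆ W ∩ W' :=
    Finset.union_subset hkey (fun x hx => Finset.mem_inter.mpr ⟨hUW hx, hUW' hx⟩)
  have hc := Finset.card_le_card hsub2
  rw [Finset.card_union_of_disjoint hdisj] at hc
  omega

lemma caseII (k : ℕ) (P Q R W1 W2 W3 Z : Finset ℕ)
    (hPc : P.card = k) (hQc : Q.card = k) (hRc : R.card = k)
    (hW1c : W1.card = k) (hW2c : W2.card = k) (hW3c : W3.card = k) (hZc : Z.card = k)
    (hPQ : (P ∩ Q).card + 1 = k) (hPR : (P ∩ R).card + 1 = k) (hQR : (Q ∩ R).card + 1 = k)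
    (hW1P : (W1 ∩ P).card + 1 = k) (hW1Q : (W1 ∩ Q).card + 2 ≤ k) (hW1R : (W1 ∩ R).card + 2 ≤ k)
    (hW2Q : (W2 ∩ Q).card + 1 = k) (hW2P : (W2 ∩ P).card + 2 ≤ k) (hW2R : (W2 ∩ R).card + 2 ≤ k)
    (hW3R : (W3 ∩ R).card + 1 = k) (hW3P : (W3 ∩ P).card + 2 ≤ k) (hW3Q : (W3 ∩ Q).card + 2 ≤ k)
    (hZW1 : (Z ∩ W1).card + 1 = k) (hZW2 : (Z ∩ W2).card + 1 = k) (hZW3 : (Z ∩ W3).card + 1 = k)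
    (hZP : (Z ∩ P).card + 2 ≤ k) (hZQ : (Z ∩ Q).card + 2 ≤ k) (hZR : (Z ∩ R).card + 2 ≤ k)
    (hW12 : (W1 ∩ W2).card + 2 ≤ k) (hW13 : (W1 ∩ W3).card + 2 ≤ k)
    (hW23 : (W2 ∩ W3).card + 2 ≤ k)
    (hm : (P ∩ Q ∩ R).card + 2 = k) : False := by
  obtain ⟨T, hTdef⟩ : ∃ T, P ∪ Q ∪ R = T := ⟨_, rfl⟩
  have hTc : T.card = k + 1 := hTdef ▸ unionCard k P Q R hPc hQc hRc hPQ hPR hQR hm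
  have hPT : P ⊆ T := by
    rw [← hTdef]; exact Finset.subset_union_left.trans Finset.subset_union_left
  have hQT : Q ⊆ T := by
    rw [← hTdef]
    exact Finset.subset_union_right.trans
      (Finset.subset_union_left : P ∪ Q ⊆ P ∪ Q ∪ R)
  have hRT : R ⊆ T := by rw [← hTdef]; exact Finset.subset_union_right
  obtain ⟨hW1T, hW1Peq, hDQ1, hDR1, hU1c, hW1sub⟩ :=
    typeIIW k T P Q R W1 hPT hQT hRT hTc hQc hRc hW1c hW1P hW1Q hW1R
  obtain ⟨hW2T, hW2Qeq, hDP2, hDR2, hU2c, hW2sub⟩ :=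
    typeIIW k T Q P R W2 hQT hPT hRT hTc hPc hRc hW2c hW2Q hW2P hW2R
  obtain ⟨hW3T, hW3Req, hDP3, hDQ3, hU3c, hW3sub⟩ :=
    typeIIW k T R P Q W3 hRT hPT hQT hTc hPc hQc hW3c hW3R hW3P hW3Q
  obtain ⟨hU1Z, hZPW1, hZPc⟩ := Zedge k P T W1 Z hU1c hW1sub hZP hZW1
  obtain ⟨hU2Z, hZQW2, hZQc⟩ := Zedge k Q T W2 Z hU2c hW2sub hZQ hZW2
  obtain ⟨hU3Z, hZRW3, hZRc⟩ := Zedge k R T W3 Z hU3c hW3sub hZR hZW3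
  have hsP := split Z P T hPT
  have hsQ := split Z Q T hQT
  have hsR := split Z R T hRT
  have hDPc : (T \ P).card = 1 := by
    rw [Finset.card_sdiff_of_subset hPT, hTc, hPc]; exact Nat.add_sub_cancel_left k 1
  have hDQc : (T \ Q).card = 1 := by
    rw [Finset.card_sdiff_of_subset hQT, hTc, hQc]; exact Nat.add_sub_cancel_left k 1
  have hDRc : (T \ R).card = 1 := by
    rw [Finset.card_sdiff_of_subset hRT, hTc, hRc]; exact Nat.add_sub_cancel_left k 1
  have hdP : (Z ∩ (T \ P)).card ≤ 1 :=
    hDPc ▸ Finset.card_le_card (Finset.inter_subset_right : Z ∩ (T \ P) ⊆ T \ P)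
  have hdQ : (Z ∩ (T \ Q)).card ≤ 1 :=
    hDQc ▸ Finset.card_le_card (Finset.inter_subset_right : Z ∩ (T \ Q) ⊆ T \ Q)
  have hdR : (Z ∩ (T \ R)).card ≤ 1 :=
    hDRc ▸ Finset.card_le_card (Finset.inter_subset_right : Z ∩ (T \ R) ⊆ T \ R)
  have hZsd : (Z ∩ T).card + (Z \ T).card = Z.card := Finset.card_inter_add_card_sdiff Z T
  have hUsub1 : W1 \ T ⊆ Z \ T :=
    fun x hx => Finset.mem_sdiff.mpr ⟨hU1Z hx, (Finset.mem_sdiff.mp hx).2⟩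
  have hUsub2 : W2 \ T ⊆ Z \ T :=
    fun x hx => Finset.mem_sdiff.mpr ⟨hU2Z hx, (Finset.mem_sdiff.mp hx).2⟩
  have hUsub3 : W3 \ T ⊆ Z \ T :=
    fun x hx => Finset.mem_sdiff.mpr ⟨hU3Z hx, (Finset.mem_sdiff.mp hx).2⟩
  rcases A4 hsP hsQ hsR hZPc hZQc hZRc hdP hdQ hdR hZsd hZc with
    ⟨hzT, hzS⟩ | ⟨hzT, hdP1, hdQ1, hdR1, hzS⟩
  · -- subcase: Z misses all three "deleted" points
    have eZP : Z ∩ P = Z ∩ T :=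
      Finset.eq_of_subset_of_card_le (Finset.inter_subset_inter Finset.Subset.rfl hPT)
        (A6 hzT hZPc)
    have eZQ : Z ∩ Q = Z ∩ T :=
      Finset.eq_of_subset_of_card_le (Finset.inter_subset_inter Finset.Subset.rfl hQT)
        (A6 hzT hZQc)
    have eZR : Z ∩ R = Z ∩ T :=
      Finset.eq_of_subset_of_card_le (Finset.inter_subset_inter Finset.Subset.rfl hRT)
        (A6 hzT hZRc)
    have hEle : ((W1 \ T) ∪ (W2 \ T) ∪ (W3 \ T)).card ≤ 2 := by
      have hs := Finset.card_le_card
        (Finset.union_subset (Finset.union_subset hUsub1 hUsub2) hUsub3)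
      rw [hzS] at hs
      exact hs
    refine ending k (Z ∩ T) (W1 \ T) (W2 \ T) (W3 \ T) W1 W2 W3
      (eZP ▸ hZPW1) (eZQ ▸ hZQW2) (eZR ▸ hZRW3) hzT hU1c hU2c hU3c
      Finset.sdiff_subset Finset.sdiff_subset Finset.sdiff_subset ?_ ?_ ?_
      hEle hW12 hW13 hW23
    · rw [Finset.disjoint_left]
      intro x hx hy
      exact (Finset.mem_sdiff.mp hy).2 (Finset.mem_inter.mp hx).2
    · rw [Finset.disjoint_left]
      intro x hx hy
      exact (Finset.mem_sdiff.mp hy).2 (Finset.mem_inter.mp hx).2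
    · rw [Finset.disjoint_left]
      intro x hx hy
      exact (Finset.mem_sdiff.mp hy).2 (Finset.mem_inter.mp hx).2
  · -- subcase: Z contains all three "deleted" points
    have hU1eq : W1 \ T = Z \ T :=
      Finset.eq_of_subset_of_card_le hUsub1 (by rw [hzS, hU1c])
    have hU2eq : W2 \ T = Z \ T :=
      Finset.eq_of_subset_of_card_le hUsub2 (by rw [hzS, hU2c])
    have hU3eq : W3 \ T = Z \ T :=
      Finset.eq_of_subset_of_card_le hUsub3 (by rw [hzS, hU3c])
    have hDPZ : T \ P ⊆ Z := subset_of_card_inter Z (T \ P) (by rw [hDPc, hdP1])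
    have hDQZ : T \ Q ⊆ Z := subset_of_card_inter Z (T \ Q) (by rw [hDQc, hdQ1])
    have hDRZ : T \ R ⊆ Z := subset_of_card_inter Z (T \ R) (by rw [hDRc, hdR1])
    obtain ⟨hE1c, hTW1eq, hE1Z⟩ :=
      subaux k T P W1 Z hTc hPc hPT hW1T hW1Peq hzT hZPc hZPW1 hDPZ
    obtain ⟨hE2c, hTW2eq, hE2Z⟩ :=
      subaux k T Q W2 Z hTc hQc hQT hW2T hW2Qeq hzT hZQc hZQW2 hDQZ
    obtain ⟨hE3c, hTW3eq, hE3Z⟩ :=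
      subaux k T R W3 Z hTc hRc hRT hW3T hW3Req hzT hZRc hZRW3 hDRZ
    have hsub12 : W1 \ T ⊆ W2 := by
      rw [hU1eq, ← hU2eq]; exact Finset.sdiff_subset
    have hsub13 : W1 \ T ⊆ W3 := by
      rw [hU1eq, ← hU3eq]; exact Finset.sdiff_subset
    have hsub23 : W2 \ T ⊆ W3 := by
      rw [hU2eq, ← hU3eq]; exact Finset.sdiff_subset
    have hE12 : (T \ W1) \ (T \ P) ≠ (T \ W2) \ (T \ Q) := fun h =>
      EiEj k T P Q ((T \ W1) \ (T \ P)) (W1 \ T) W1 W2 hTW1eq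
        (by rw [h]; exact hTW2eq) hTc hU1c Finset.sdiff_subset hsub12
        Finset.sdiff_disjoint hW12 hDPc hDQc hE1c
    have hE13 : (T \ W1) \ (T \ P) ≠ (T \ W3) \ (T \ R) := fun h =>
      EiEj k T P R ((T \ W1) \ (T \ P)) (W1 \ T) W1 W3 hTW1eq
        (by rw [h]; exact hTW3eq) hTc hU1c Finset.sdiff_subset hsub13
        Finset.sdiff_disjoint hW13 hDPc hDRc hE1c
    have hE23 : (T \ W2) \ (T \ Q) ≠ (T \ W3) \ (T \ R) := fun h =>
      EiEj k T Q R ((T \ W2) \ (T \ Q)) (W2 \ T) W2 W3 hTW2eq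
        (by rw [h]; exact hTW3eq) hTc hU2c Finset.sdiff_subset hsub23
        Finset.sdiff_disjoint hW23 hDQc hDRc hE2c
    have hE3 := three_distinct _ _ _ hE1c hE2c hE3c hE12 hE13 hE23
    have hsubT : (Z ∩ T) ∪ (((T \ W1) \ (T \ P)) ∪ ((T \ W2) \ (T \ Q)) ∪
        ((T \ W3) \ (T \ R))) ⊆ T := by
      intro x hx
      rcases Finset.mem_union.mp hx with h | h
      · exact (Finset.mem_inter.mp h).2
      · rcases Finset.mem_union.mp h with h | h
        · rcases Finset.mem_union.mp h with h | h
          · exact (Finset.mem_sdiff.mp (Finset.sdiff_subset h)).1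
          · exact (Finset.mem_sdiff.mp (Finset.sdiff_subset h)).1
        · exact (Finset.mem_sdiff.mp (Finset.sdiff_subset h)).1
    have hdisjT : Disjoint (Z ∩ T) (((T \ W1) \ (T \ P)) ∪ ((T \ W2) \ (T \ Q)) ∪
        ((T \ W3) \ (T \ R))) := by
      rw [Finset.disjoint_left]
      intro x hx hy
      have hxZ : x ∈ Z := (Finset.mem_inter.mp hx).1
      rcases Finset.mem_union.mp hy with h | h
      · rcases Finset.mem_union.mp h with h | h
        · exact (Finset.disjoint_left.mp hE1Z) h hxZ
        · exact (Finset.disjoint_left.mp hE2Z) h hxZ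
      · exact (Finset.disjoint_left.mp hE3Z) h hxZ
    have hc := Finset.card_le_card hsubT
    rw [Finset.card_union_of_disjoint hdisjT, hE3] at hc
    exact A5 hc hTc hzT


lemma A7 {m pq qr q k : ℕ} (h1 : m ≤ pq) (h2 : pq + qr ≤ q + m) (h3 : pq + 1 = k)
    (h4 : qr + 1 = k) (h5 : q = k) : m + 1 = k ∨ m + 2 = k := by omega

lemma keylemma (k : ℕ) (P Q R W1 W2 W3 Z : Finset ℕ)
    (hPc : P.card = k) (hQc : Q.card = k) (hRc : R.card = k)
    (hW1c : W1.card = k) (hW2c : W2.card = k) (hW3c : W3.card = k) (hZc : Z.card = k)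
    (hPQ : (P ∩ Q).card + 1 = k) (hPR : (P ∩ R).card + 1 = k) (hQR : (Q ∩ R).card + 1 = k)
    (hW1P : (W1 ∩ P).card + 1 = k) (hW1Q : (W1 ∩ Q).card + 2 ≤ k) (hW1R : (W1 ∩ R).card + 2 ≤ k)
    (hW2Q : (W2 ∩ Q).card + 1 = k) (hW2P : (W2 ∩ P).card + 2 ≤ k) (hW2R : (W2 ∩ R).card + 2 ≤ k)
    (hW3R : (W3 ∩ R).card + 1 = k) (hW3P : (W3 ∩ P).card + 2 ≤ k) (hW3Q : (W3 ∩ Q).card + 2 ≤ k)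
    (hZW1 : (Z ∩ W1).card + 1 = k) (hZW2 : (Z ∩ W2).card + 1 = k) (hZW3 : (Z ∩ W3).card + 1 = k)
    (hZP : (Z ∩ P).card + 2 ≤ k) (hZQ : (Z ∩ Q).card + 2 ≤ k) (hZR : (Z ∩ R).card + 2 ≤ k)
    (hW12 : (W1 ∩ W2).card + 2 ≤ k) (hW13 : (W1 ∩ W3).card + 2 ≤ k)
    (hW23 : (W2 ∩ W3).card + 2 ≤ k) : False := by
  have hm1 : (P ∩ Q ∩ R).card ≤ (P ∩ Q).card := Finset.card_le_card Finset.inter_subset_left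
  have hm2 := submod P Q R
  rcases A7 hm1 hm2 hPQ hQR hQc with h | h
  · exact caseI k P Q R W1 W2 W3 Z hPc hQc hRc hW1c hW2c hW3c hZc hPQ hPR hQR
      hW1P hW1Q hW1R hW2Q hW2P hW2R hW3R hW3P hW3Q hZW1 hZW2 hZW3 hZP hZQ hZR
      hW12 hW13 hW23 h
  · exact caseII k P Q R W1 W2 W3 Z hPc hQc hRc hW1c hW2c hW3c hZc hPQ hPR hQR
      hW1P hW1Q hW1R hW2Q hW2P hW2R hW3R hW3P hW3Q hZW1 hZW2 hZW3 hZP hZQ hZR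
      hW12 hW13 hW23 h

end SevenAux

lemma labellable_of_del (v0 : Fin 7) (k : ℕ) (L : Fin 7 → Finset ℕ) (hk : 0 < k)
    (hinj : ∀ a b : Fin 7, a ≠ v0 → b ≠ v0 → L a = L b → a = b)
    (hcard : ∀ a : Fin 7, a ≠ v0 → (L a).card = k)
    (hadj : ∀ a b : Fin 7, a ≠ v0 → b ≠ v0 → a ≠ b →
      (sevenVertexGraph.Adj a b ↔ (L a ∩ L b).card = k - 1))
    {s : Set (Fin 7)} (hv0 : v0 ∉ s) : Labellable (sevenVertexGraph.induce s) := by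
  refine ⟨k, hk, fun x => L x.val, ?_, ?_, ?_⟩
  · intro a b h
    exact Subtype.ext (hinj _ _ (fun e => hv0 (e ▸ a.2)) (fun e => hv0 (e ▸ b.2)) h)
  · intro v; exact hcard _ (fun e => hv0 (e ▸ v.2))
  · intro u v huv
    exact hadj u.val v.val (fun e => hv0 (e ▸ u.2)) (fun e => hv0 (e ▸ v.2))
      (fun e => huv (Subtype.ext e))

/-- This 7-vertex graph is minimally unlabellable: it is not labellable, but
every proper induced subgraph of it is labellable. -/
theorem sevenVertexGraph_minimally_unlabellable :
    ¬ Labellable sevenVertexGraph ∧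
      ∀ s : Set (Fin 7), s ≠ Set.univ →
        Labellable (sevenVertexGraph.induce s) := by
  constructor
  · rintro ⟨k, hk, A, hinj, hcard, hiff⟩
    have hedge : ∀ u v : Fin 7, sevenVertexGraph.Adj u v → (A u ∩ A v).card + 1 = k := by
      intro u v h
      have h1 := (hiff u v h.ne).mp h
      have h2 : (A u ∩ A v).card ≤ k :=
        hcard u ▸ Finset.card_le_card Finset.inter_subset_left
      omega
    have hnon : ∀ u v : Fin 7, u ≠ v → ¬ sevenVertexGraph.Adj u v →
        (A u ∩ A v).card + 2 ≤ k := by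
      intro u v hne hna
      have h1 : (A u ∩ A v).card ≠ k - 1 := fun h => hna ((hiff u v hne).mpr h)
      have h2 : (A u ∩ A v).card ≤ k :=
        hcard u ▸ Finset.card_le_card Finset.inter_subset_left
      have h3 : (A u ∩ A v).card ≠ k := by
        intro h
        have e1 : A u ∩ A v = A u :=
          Finset.eq_of_subset_of_card_le Finset.inter_subset_left (by rw [hcard u, h])
        have e2 : A u ∩ A v = A v :=
          Finset.eq_of_subset_of_card_le Finset.inter_subset_right (by rw [hcard v, h])
        exact hne (hinj (by rw [← e1, e2]))
      omega
    exact SevenAux.keylemma k (A 2) (A 3) (A 4) (A 1) (A 6) (A 5) (A 0)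
      (hcard 2) (hcard 3) (hcard 4) (hcard 1) (hcard 6) (hcard 5) (hcard 0)
      (hedge 2 3 (by decide)) (hedge 2 4 (by decide)) (hedge 3 4 (by decide))
      (hedge 1 2 (by decide)) (hnon 1 3 (by decide) (by decide))
      (hnon 1 4 (by decide) (by decide))
      (hedge 6 3 (by decide)) (hnon 6 2 (by decide) (by decide))
      (hnon 6 4 (by decide) (by decide))
      (hedge 5 4 (by decide)) (hnon 5 2 (by decide) (by decide))
      (hnon 5 3 (by decide) (by decide))
      (hedge 0 1 (by decide)) (hedge 0 6 (by decide)) (hedge 0 5 (by decide))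
      (hnon 0 2 (by decide) (by decide)) (hnon 0 3 (by decide) (by decide))
      (hnon 0 4 (by decide) (by decide))
      (hnon 1 6 (by decide) (by decide)) (hnon 1 5 (by decide) (by decide))
      (hnon 6 5 (by decide) (by decide))
  · intro s hs
    obtain ⟨v0, hv0⟩ : ∃ v0, v0 ∉ s := by
      by_contra h; push_neg at h; exact hs (Set.eq_univ_iff_forall.mpr h)
    fin_cases v0
    · exact labellable_of_del 0 2 ![∅, {0,1}, {0,2}, {2,3}, {2,4}, {4,5}, {3,6}]
        (by norm_num) (by decide) (by decide) (by decide) hv0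
    · exact labellable_of_del 1 2 ![{0,1}, ∅, {2,3}, {2,4}, {2,5}, {0,5}, {1,4}]
        (by norm_num) (by decide) (by decide) (by decide) hv0
    · exact labellable_of_del 2 3 ![{0,1,2}, {0,1,3}, ∅, {0,4,5}, {1,4,5}, {1,2,4}, {0,2,5}]
        (by norm_num) (by decide) (by decide) (by decide) hv0
    · exact labellable_of_del 3 3 ![{0,1,2}, {0,1,3}, {0,3,4}, ∅, {0,4,5}, {0,2,5}, {1,2,4}]
        (by norm_num) (by decide) (by decide) (by decide) hv0
    · exact labellable_of_del 4 3 ![{0,1,2}, {0,1,3}, {0,3,4}, {0,4,5}, ∅, {1,2,4}, {0,2,5}]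
        (by norm_num) (by decide) (by decide) (by decide) hv0
    · exact labellable_of_del 5 2 ![{0,1}, {0,2}, {2,3}, {3,4}, {3,5}, ∅, {1,4}]
        (by norm_num) (by decide) (by decide) (by decide) hv0
    · exact labellable_of_del 6 2 ![{0,1}, {0,2}, {2,3}, {3,4}, {3,5}, {1,5}, ∅]
        (by norm_num) (by decide) (by decide) (by decide) hv0
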